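/- Let S : C → C be a nonspreading mapping on a nonempty closed convex subset C of a real Hilbert space with Fix(S) ≠ ∅. Then I − S is demiclosed at 0: if xₙ ⇀ p weakly and xₙ − Sxₙ → 0 strongly, then p ∈ Fix(S). -/

import Mathlib

open Filter Topology

private lemma ns_identity {H : Type*} [NormedAddCommGroup H] [InnerProductSpace ℝ H]
    (u v p q : H) :
    ‖p-q‖^2 = (-2*(inner ℝ (u-p) (p-q) : ℝ) - ‖v-u‖^2 - 4*(inner ℝ (v-u) (u-q):ℝ)
        + 2*(inner ℝ (v-u) (u-p):ℝ))
      - (‖v-p‖^2 + ‖u-q‖^2 - 2*‖v-q‖^2) := by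
  simp only [← real_inner_self_eq_norm_sq, inner_sub_left, inner_sub_right]
  ring_nf
  linarith [real_inner_comm u v, real_inner_comm u p, real_inner_comm u q,
    real_inner_comm v p, real_inner_comm v q, real_inner_comm p q]

theorem stmt_5 {H : Type*} [NormedAddCommGroup H] [InnerProductSpace ℝ H] [CompleteSpace H]
    (C : Set H) (hC : C.Nonempty) (hCc : IsClosed C) (hCv : Convex ℝ C)
    (S : H → H) (hS : Set.MapsTo S C C)
    (hns : ∀ x ∈ C, ∀ y ∈ C, 2 * ‖S x - S y‖ ^ 2 ≤ ‖S x - y‖ ^ 2 + ‖x - S y‖ ^ 2)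
    (hFix : ∃ z ∈ C, S z = z)
    (x : ℕ → H) (hxC : ∀ n, x n ∈ C) (p : H)
    (hweak : ∀ y : H, Filter.Tendsto (fun n => (inner ℝ (x n - p) y : ℝ)) Filter.atTop (nhds 0))
    (hstrong : Filter.Tendsto (fun n => x n - S (x n)) Filter.atTop (nhds 0)) :
    p ∈ C ∧ S p = p := by
  -- p ∈ C : closed convex sets are weakly closed (via separation)
  have hpC : p ∈ C := by
    by_contra hp
    obtain ⟨f, u, hfp, hfs⟩ := geometric_hahn_banach_point_closed hCv hCc hp
    set v := (InnerProductSpace.toDual ℝ H).symm f with hv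
    have heq : ∀ n, (inner ℝ (x n - p) v : ℝ) = f (x n) - f p := by
      intro n
      rw [real_inner_comm, hv, InnerProductSpace.toDual_symm_apply, map_sub]
    have hfl : Tendsto (fun n => f (x n)) atTop (nhds (f p)) := by
      have h0 := hweak v
      simp only [heq] at h0
      have := h0.add_const (f p)
      simpa using this
    have hle : u ≤ f p :=
      ge_of_tendsto hfl (Filter.Eventually.of_forall fun n => (hfs _ (hxC n)).le)
    linarith
  refine ⟨hpC, ?_⟩
  -- boundedness of (x n - p) via Banach–Steinhaus
  obtain ⟨M, hM⟩ : ∃ M, ∀ n, ‖x n - p‖ ≤ M := by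
    have h1 : ∀ y : H, ∃ c, ∀ n,
        ‖(InnerProductSpace.toDual ℝ H (x n - p)) y‖ ≤ c := by
      intro y
      obtain ⟨c, hc⟩ := (hweak y).norm.bddAbove_range
      exact ⟨c, fun n => by
        simpa [InnerProductSpace.toDual_apply_apply, inner_sub_left] using hc ⟨n, rfl⟩⟩
    obtain ⟨M, hM⟩ := banach_steinhaus h1
    refine ⟨M, fun n => ?_⟩
    have h := hM n
    rwa [LinearIsometryEquiv.norm_map] at h
  -- notation
  set q := S p with hq
  set ε : ℕ → ℝ := fun n => ‖x n - S (x n)‖ with hε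
  have hε0 : Tendsto ε atTop (nhds 0) := by
    simpa using hstrong.norm
  have hεnn : ∀ n, 0 ≤ ε n := fun n => norm_nonneg _
  -- key inequality from nonspreadingness
  set a : ℕ → ℝ := fun n =>
    -2*(inner ℝ (x n - p) (p - q) : ℝ) - ‖S (x n) - x n‖^2
      - 4*(inner ℝ (S (x n) - x n) (x n - q):ℝ) + 2*(inner ℝ (S (x n) - x n) (x n - p):ℝ)
    with ha
  have key : ∀ n, ‖p - q‖^2 ≤ a n := by
    intro n
    have h1 := hns (x n) (hxC n) p hpC
    have h2 := ns_identity (x n) (S (x n)) p q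
    rw [ha]
    dsimp only
    linarith
  -- each piece of a tends to 0
  have ht1 : Tendsto (fun n => (inner ℝ (x n - p) (p - q) : ℝ)) atTop (nhds 0) := hweak (p - q)
  have ht2 : Tendsto (fun n => ‖S (x n) - x n‖^2) atTop (nhds 0) := by
    have : Tendsto (fun n => ε n * ε n) atTop (nhds 0) := by
      simpa using hε0.mul hε0
    refine this.congr fun n => ?_
    rw [← norm_sub_rev (x n), ← sq]
  have hbound : ∀ (w : ℕ → H) (K : ℝ), (∀ n, ‖w n‖ ≤ K) →
      Tendsto (fun n => (inner ℝ (S (x n) - x n) (w n) : ℝ)) atTop (nhds 0) := by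
    intro w K hK
    refine squeeze_zero_norm (fun n => ?_) (by simpa using hε0.mul_const K)
    calc ‖(inner ℝ (S (x n) - x n) (w n) : ℝ)‖ ≤ ‖S (x n) - x n‖ * ‖w n‖ :=
            norm_inner_le_norm _ _
      _ = ε n * ‖w n‖ := by rw [norm_sub_rev]
      _ ≤ ε n * K := mul_le_mul_of_nonneg_left (hK n) (hεnn n)
  have ht3 : Tendsto (fun n => (inner ℝ (S (x n) - x n) (x n - q) : ℝ)) atTop (nhds 0) := by
    refine hbound _ (M + ‖p - q‖) fun n => ?_
    calc ‖x n - q‖ ≤ ‖x n - p‖ + ‖p - q‖ := norm_sub_le_norm_sub_add_norm_sub _ _ _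
      _ ≤ M + ‖p - q‖ := by linarith [hM n]
  have ht4 : Tendsto (fun n => (inner ℝ (S (x n) - x n) (x n - p) : ℝ)) atTop (nhds 0) :=
    hbound _ M hM
  have haz : Tendsto a atTop (nhds 0) := by
    have := (((ht1.const_mul (-2)).sub ht2).sub (ht3.const_mul 4)).add (ht4.const_mul 2)
    simp only [mul_zero, sub_zero, add_zero] at this
    refine this.congr fun n => by rw [ha]
  have hle : ‖p - q‖^2 ≤ 0 := ge_of_tendsto' haz key
  have : ‖p - q‖ = 0 := by
    have := norm_nonneg (p - q)
    nlinarith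
  have hpq : p - q = 0 := norm_eq_zero.mp this
  rw [hq] at hpq
  exact (sub_eq_zero.mp hpq).symm
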